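/- (Solid Milman theorem, norm compact case) Let X be a Banach lattice and K ⊆ X a norm-compact set. Then every order extreme point of the closed solid convex hull csch(K) belongs to |K| = {|x| : x ∈ K}. -/

import Mathlib

open Set Metric

variable {X : Type*} [NormedAddCommGroup X] [Lattice X] [HasSolidNorm X] [IsOrderedAddMonoid X] [NormedSpace ℝ X] [PosSMulStrictMono ℝ X]
  [CompleteSpace X]

/-- A set is solid if `|x| ≤ |z|` with `z ∈ A` implies `x ∈ A`. -/
def IsSolidSet (A : Set X) : Prop := ∀ ⦃x z : X⦄, z ∈ A → |x| ≤ |z| → x ∈ A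

/-- A subset of the positive cone is positive-solid if `0 ≤ x ≤ z` with `z ∈ A`
implies `x ∈ A`. -/
def IsPosSolidSet (A : Set X) : Prop := ∀ ⦃x z : X⦄, 0 ≤ x → z ∈ A → x ≤ z → x ∈ A

/-- The solid hull of a set: the smallest solid set containing it. -/
def solidHull (C : Set X) : Set X := {z : X | ∃ x ∈ C, |z| ≤ |x|}

/-- The solid convex hull: the smallest convex solid set containing `C`. -/
def solidConvexHull (C : Set X) : Set X :=
  ⋂₀ {D : Set X | C ⊆ D ∧ Convex ℝ D ∧ IsSolidSet D}

/-- The set of order extreme points of `A`. -/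
def orderExtremePoints (A : Set X) : Set X :=
  {a | a ∈ A ∧ ∀ x₀ ∈ A, ∀ x₁ ∈ A, ∀ t : ℝ, 0 < t → t < 1 →
    a ≤ (1 - t) • x₀ + t • x₁ → x₀ = a ∧ x₁ = a}

/- ### Auxiliary lemmas -/

lemma myContinuousAbs : Continuous (fun x : X => |x|) :=
  continuous_id.sup continuous_neg

lemma subset_sch (K : Set X) : K ⊆ solidConvexHull K :=
  fun _x hx => mem_sInter.2 fun _D hD => hD.1 hx

lemma convex_sch (K : Set X) : Convex ℝ (solidConvexHull K) :=
  convex_sInter fun _D hD => hD.2.1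

lemma solid_sch (K : Set X) : IsSolidSet (solidConvexHull K) := by
  intro x z hz hxz
  rw [solidConvexHull, mem_sInter] at hz ⊢
  exact fun D hD => hD.2.2 (hz D hD) hxz

lemma sch_min {K D : Set X} (h1 : K ⊆ D) (h2 : Convex ℝ D) (h3 : IsSolidSet D) :
    solidConvexHull K ⊆ D := fun _x hx => (mem_sInter.1 hx) D ⟨h1, h2, h3⟩

lemma solid_closure {A : Set X} (hA : IsSolidSet A) : IsSolidSet (closure A) := by
  intro x z hz hxz
  set f : X → X := fun w => (x ⊓ |w|) ⊔ (-|w|) with hf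
  have hfc : Continuous f :=
    ((continuous_const.inf myContinuousAbs).sup (myContinuousAbs.neg))
  have himg : ∀ w ∈ A, f w ∈ A := by
    intro w hw
    refine hA hw (abs_le'.2 ⟨?_, ?_⟩)
    · exact sup_le inf_le_right ((neg_le_abs _).trans_eq (abs_abs w))
    · exact neg_le.2 le_sup_right
  have hx1 : x ≤ |z| := le_trans (le_abs_self x) hxz
  have hx2 : -|z| ≤ x := le_trans (neg_le_neg hxz) (neg_le.1 (neg_le_abs x))
  have hfz : f z = x := by
    rw [hf]
    simp only
    rw [inf_eq_left.2 hx1, sup_eq_left.2 hx2]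
  have : f z ∈ closure A := by
    have h1 : f z ∈ f '' closure A := mem_image_of_mem f hz
    have h2 : f '' closure A ⊆ closure (f '' A) := image_closure_subset_closure_image hfc
    exact closure_mono (image_subset_iff.2 himg) (h2 h1)
  rwa [hfz] at this

lemma mem_sch_abs {K : Set X} {z : X} (hz : z ∈ solidConvexHull K) :
    |z| ∈ solidConvexHull K :=
  solid_sch K hz (by rw [abs_abs])

lemma closure_sch_subset (K : Set X) (hK : IsCompact K) :
    closure (solidConvexHull K) ⊆
      {x : X | ∃ y ∈ closure (convexHull ℝ (abs '' K)), |x| ≤ y} := by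
  set Q := closure (convexHull ℝ (abs '' K)) with hQdef
  have hQcomp : IsCompact Q :=
    TotallyBounded.isCompact_of_isClosed
      ((totallyBounded_convexHull.2 (hK.image myContinuousAbs).totallyBounded).closure)
      isClosed_closure
  have hQconv : Convex ℝ Q := (convex_convexHull ℝ _).closure
  have hDclosed : IsClosed {x : X | ∃ y ∈ Q, |x| ≤ y} := by
    rw [← isSeqClosed_iff_isClosed]
    intro u x hu hux
    choose y hyQ hy using hu
    obtain ⟨y₀, hy₀Q, φ, hφ, hyconv⟩ := hQcomp.tendsto_subseq hyQ
    refine ⟨y₀, hy₀Q, ?_⟩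
    have h1 : Filter.Tendsto (fun n => |u (φ n)|) Filter.atTop (nhds |x|) :=
      (myContinuousAbs.tendsto x).comp (hux.comp hφ.tendsto_atTop)
    exact le_of_tendsto_of_tendsto' h1 hyconv fun n => hy (φ n)
  apply closure_minimal ?_ hDclosed
  apply sch_min
  · intro k hk
    exact ⟨|k|, subset_closure (subset_convexHull ℝ _ (mem_image_of_mem _ hk)), le_refl _⟩
  · intro x₁ hx₁ x₂ hx₂ u v hu hv huv
    obtain ⟨y₁, hy₁Q, hy₁⟩ := hx₁
    obtain ⟨y₂, hy₂Q, hy₂⟩ := hx₂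
    refine ⟨u • y₁ + v • y₂, hQconv hy₁Q hy₂Q hu hv huv, ?_⟩
    have hx₁le : x₁ ≤ y₁ := le_trans (le_abs_self _) hy₁
    have hx₂le : x₂ ≤ y₂ := le_trans (le_abs_self _) hy₂
    have hx₁ge : -x₁ ≤ y₁ := (neg_le_abs x₁).trans hy₁
    have hx₂ge : -x₂ ≤ y₂ := (neg_le_abs x₂).trans hy₂
    rw [abs_le']
    constructor
    · exact add_le_add (smul_le_smul_of_nonneg_left hx₁le hu)
        (smul_le_smul_of_nonneg_left hx₂le hv)
    · rw [neg_add, ← smul_neg, ← smul_neg]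
      exact add_le_add (smul_le_smul_of_nonneg_left hx₁ge hu)
        (smul_le_smul_of_nonneg_left hx₂ge hv)
  · intro x z hz hxz
    obtain ⟨y, hyQ, hy⟩ := hz
    exact ⟨y, hyQ, hxz.trans hy⟩

lemma isCompact_convexJoin {s t : Set X} (hs : IsCompact s) (ht : IsCompact t) :
    IsCompact (convexJoin ℝ s t) := by
  have heq : convexJoin ℝ s t =
      (fun p : ℝ × X × X => (1 - p.1) • p.2.1 + p.1 • p.2.2) '' ((Icc (0:ℝ) 1) ×ˢ s ×ˢ t) := by
    ext z
    simp only [mem_convexJoin, mem_image, mem_prod, Prod.exists]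
    constructor
    · rintro ⟨x, hx, y, hy, hz⟩
      rw [segment_eq_image] at hz
      obtain ⟨θ, hθ, hz⟩ := hz
      exact ⟨θ, x, y, ⟨hθ, hx, hy⟩, hz⟩
    · rintro ⟨θ, x, y, ⟨hθ, hx, hy⟩, hz⟩
      refine ⟨x, hx, y, hy, ?_⟩
      rw [segment_eq_image]
      exact ⟨θ, hθ, hz⟩
  rw [heq]
  refine (isCompact_Icc.prod (hs.prod ht)).image ?_
  exact ((continuous_const.sub continuous_fst).smul (continuous_snd.fst)).add
    (continuous_fst.smul continuous_snd.snd)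

lemma compact_convexHull_biUnion {ι : Type*} (Q : ι → Set X) (F : Finset ι) :
    (∀ i ∈ F, IsCompact (Q i)) → (∀ i ∈ F, Convex ℝ (Q i)) →
    IsCompact (convexHull ℝ (⋃ i ∈ F, Q i)) := by
  classical
  induction F using Finset.induction_on with
  | empty => intro _ _; simp
  | @insert j F hj ih =>
    intro hQ hconv
    rw [Finset.set_biUnion_insert]
    have hBcomp := ih (fun i hi => hQ i (Finset.mem_insert_of_mem hi))
      (fun i hi => hconv i (Finset.mem_insert_of_mem hi))
    have hQj := hQ j (Finset.mem_insert_self j F)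
    have hQjconv := hconv j (Finset.mem_insert_self j F)
    rcases (⋃ i ∈ F, Q i).eq_empty_or_nonempty with hBe | hBne
    · rw [hBe, union_empty, hQjconv.convexHull_eq]
      exact hQj
    rcases (Q j).eq_empty_or_nonempty with hQje | hQjne
    · rw [hQje, empty_union]
      exact hBcomp
    · rw [convexHull_union hQjne hBne, hQjconv.convexHull_eq]
      exact isCompact_convexJoin hQj hBcomp

lemma extreme_mem_of_mem_convexHull {ι : Type*} {C : Set X} {a : X}
    (hCconv : Convex ℝ C)
    (hext : ∀ x₀ ∈ C, ∀ x₁ ∈ C, ∀ t : ℝ, 0 < t → t < 1 →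
      a ≤ (1 - t) • x₀ + t • x₁ → x₀ = a ∧ x₁ = a)
    (Q : ι → Set X) (F : Finset ι) :
    (∀ i ∈ F, Convex ℝ (Q i)) → (∀ i ∈ F, Q i ⊆ C) →
    a ∈ convexHull ℝ (⋃ i ∈ F, Q i) → ∃ i ∈ F, a ∈ Q i := by
  classical
  induction F using Finset.induction_on with
  | empty => intro _ _ h; simp at h
  | @insert j F hj ih =>
    intro hconv hsub ha
    rw [Finset.set_biUnion_insert] at ha
    have hQjconv := hconv j (Finset.mem_insert_self j F)
    have hih := ih (fun i hi => hconv i (Finset.mem_insert_of_mem hi))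
      (fun i hi => hsub i (Finset.mem_insert_of_mem hi))
    rcases (⋃ i ∈ F, Q i).eq_empty_or_nonempty with hBe | hBne
    · rw [hBe, union_empty, hQjconv.convexHull_eq] at ha
      exact ⟨j, Finset.mem_insert_self j F, ha⟩
    rcases (Q j).eq_empty_or_nonempty with hQje | hQjne
    · rw [hQje, empty_union] at ha
      obtain ⟨i, hi, hmem⟩ := hih ha
      exact ⟨i, Finset.mem_insert_of_mem hi, hmem⟩
    · rw [convexHull_union hQjne hBne, hQjconv.convexHull_eq, mem_convexJoin] at ha
      obtain ⟨x, hx, y, hy, u, v, hu, hv, huv, heq⟩ := ha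
      have hyC : y ∈ C := convexHull_min
        (iUnion₂_subset fun i hi => hsub i (Finset.mem_insert_of_mem hi)) hCconv hy
      have hxC : x ∈ C := hsub j (Finset.mem_insert_self j F) hx
      rcases eq_or_lt_of_le hv with hv0 | hvpos
      · have hax : a = x := by
          rw [← heq, ← hv0, zero_smul, add_zero, show u = 1 by linarith, one_smul]
        exact ⟨j, Finset.mem_insert_self j F, hax ▸ hx⟩
      rcases eq_or_lt_of_le (show v ≤ 1 by linarith) with hv1 | hvlt
      · have hay : a = y := by
          rw [← heq, show u = 0 by linarith, zero_smul, zero_add, hv1, one_smul]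
        obtain ⟨i, hi, hmem⟩ := hih (hay ▸ hy)
        exact ⟨i, Finset.mem_insert_of_mem hi, hmem⟩
      · have hcomb : (1 - v) • x + v • y = a := by
          rw [show (1 - v : ℝ) = u by linarith]
          exact heq
        have hxa := (hext x hxC y hyC v hvpos hvlt (le_of_eq hcomb.symm)).1
        exact ⟨j, Finset.mem_insert_self j F, hxa ▸ hx⟩

theorem statement10 (K : Set X) (hcomp : IsCompact K) :
    orderExtremePoints (closure (solidConvexHull K)) ⊆ abs '' K := by
  classical
  intro a ha
  obtain ⟨haC, hext⟩ := ha
  set C := closure (solidConvexHull K) with hC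
  set L := abs '' K with hL
  have hLcomp : IsCompact L := hcomp.image myContinuousAbs
  set Q := closure (convexHull ℝ L) with hQ
  have hQsubC : Q ⊆ C := closure_mono (convexHull_min
    (fun x hx => by
      obtain ⟨k, hk, rfl⟩ := hx
      exact mem_sch_abs (subset_sch K hk)) (convex_sch K))
  have hCsolid : IsSolidSet C := solid_closure (solid_sch K)
  have hCconv : Convex ℝ C := (convex_sch K).closure
  -- any element of C above a equals a
  have hhalf : ∀ y ∈ C, a ≤ y → y = a := by
    intro y hy hay
    have harith : (1 - (1/2 : ℝ)) • y + (1/2 : ℝ) • y = y := by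
      rw [← add_smul]; norm_num
    exact (hext y hy y hy (1/2) (by norm_num) (by norm_num) (by rw [harith]; exact hay)).1
  -- a is nonnegative
  have habsC : |a| ∈ C := hCsolid haC (by rw [abs_abs])
  have hapos : 0 ≤ a := by
    have h := hhalf |a| habsC (le_abs_self a)
    rw [← h]; exact abs_nonneg a
  -- a belongs to Q
  obtain ⟨y, hyQ, hay⟩ := closure_sch_subset K hcomp haC
  rw [abs_of_nonneg hapos] at hay
  have haQ : a ∈ Q := by rw [← hhalf y (hQsubC hyQ) hay]; exact hyQ
  -- Milman argument
  have key : ∀ ε > (0:ℝ), ∃ z ∈ L, dist a z ≤ ε := by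
    intro ε hε
    have hcover : L ⊆ ⋃ z ∈ L, ball z ε := fun z hz => mem_biUnion hz (mem_ball_self hε)
    obtain ⟨s, hsL, hsfin, hscover⟩ :=
      hLcomp.elim_finite_subcover_image (fun z _ => isOpen_ball) hcover
    set QQ : X → Set X := fun z => closure (convexHull ℝ (L ∩ closedBall z ε)) with hQQ
    have hQQcomp : ∀ z : X, IsCompact (QQ z) := fun z =>
      TotallyBounded.isCompact_of_isClosed
        ((totallyBounded_convexHull.2
          ((hLcomp.inter_right isClosed_closedBall).totallyBounded)).closure)
        isClosed_closure
    have hQQconv : ∀ z : X, Convex ℝ (QQ z) := fun z => (convex_convexHull ℝ _).closure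
    have hQQsubC : ∀ z : X, QQ z ⊆ C := fun z =>
      subset_trans (closure_mono (convexHull_mono inter_subset_left)) hQsubC
    set F : Finset X := hsfin.toFinset with hF
    have hLsub : L ⊆ ⋃ z ∈ F, QQ z := by
      intro x hx
      obtain ⟨z, hz, hxz⟩ := mem_iUnion₂.1 (hscover hx)
      refine mem_iUnion₂.2 ⟨z, hsfin.mem_toFinset.2 hz, ?_⟩
      exact subset_closure (subset_convexHull ℝ _ ⟨hx, ball_subset_closedBall hxz⟩)
    have hclosed : IsClosed (convexHull ℝ (⋃ z ∈ F, QQ z)) :=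
      (compact_convexHull_biUnion QQ F (fun i _ => hQQcomp i) (fun i _ => hQQconv i)).isClosed
    have hQsub : Q ⊆ convexHull ℝ (⋃ z ∈ F, QQ z) :=
      closure_minimal (convexHull_min (subset_trans hLsub (subset_convexHull ℝ _))
        (convex_convexHull ℝ _)) hclosed
    obtain ⟨z, hzF, haz⟩ := extreme_mem_of_mem_convexHull hCconv hext QQ F
      (fun i _ => hQQconv i) (fun i _ => hQQsubC i) (hQsub haQ)
    have hQQball : QQ z ⊆ closedBall z ε :=
      closure_minimal (convexHull_min inter_subset_right (convex_closedBall z ε)) isClosed_closedBall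
    refine ⟨z, hsL (hsfin.mem_toFinset.1 hzF), ?_⟩
    exact mem_closedBall.1 (hQQball haz)
  have hacl : a ∈ closure L := by
    rw [Metric.mem_closure_iff]
    intro ε hε
    obtain ⟨z, hz, hdist⟩ := key (ε/2) (by linarith)
    exact ⟨z, hz, by linarith⟩
  rwa [hLcomp.isClosed.closure_eq] at hacl
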